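/- Let μ be a p×p matrix of locally finite measures on [0,∞) satisfying (A1) and (A2). If there exists m ∈ ℕ such that limsup_{η→±∞} sup_{θ ≥ ϑ} ‖Lμ(θ+iη)^m‖ < 1, then the set Λ_ϑ = {λ ∈ D(Lμ) : Re(λ) > ϑ, det(I_p − Lμ(λ)) = 0} is finite. -/

import Mathlib

open MeasureTheory Filter Topology

noncomputable section

/-- The spectral radius of a complex `p × p` matrix: the supremum of the absolute values
of its eigenvalues. -/
def specRad (p : ℕ) (A : Matrix (Fin p) (Fin p) ℂ) : ℝ :=
  sSup ((fun z => ‖z‖) '' spectrum ℂ A)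

/-- The matrix of atoms at `0`, `μ(0) = (μ^{i,j}({0}))_{i,j}`, viewed as a complex matrix. -/
def atomMat {p : ℕ} (μ : Fin p → Fin p → Measure ℝ) : Matrix (Fin p) (Fin p) ℂ :=
  Matrix.of fun i j => ((μ i j {0}).toReal : ℂ)

/-- The Laplace transform `Lμ(z)` of a matrix of measures. -/
def lapT {p : ℕ} (μ : Fin p → Fin p → Measure ℝ) (z : ℂ) : Matrix (Fin p) (Fin p) ℂ :=
  Matrix.of fun i j => ∫ x, Complex.exp (-z * x) ∂(μ i j)

/-- The domain `D(Lμ)` of the Laplace transform. -/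
def LTdom {p : ℕ} (μ : Fin p → Fin p → Measure ℝ) : Set ℂ :=
  {z | ∀ i j, Integrable (fun x => Real.exp (-z.re * x)) (μ i j)}

/-- Matrix convolution of two matrices of measures:
`(μ*ν)^{i,j} = Σ_k μ^{i,k} * ν^{k,j}`. -/
def mconv {p : ℕ} (μ ν : Fin p → Fin p → Measure ℝ) : Fin p → Fin p → Measure ℝ :=
  fun i j => ∑ k, (μ i k).conv (ν k j)

/-- Matrix convolution powers: `μ^{*0} = I_p δ_0`, `μ^{*(n+1)} = μ * μ^{*n}`. -/
def mconvPow {p : ℕ} (μ : Fin p → Fin p → Measure ℝ) : ℕ → Fin p → Fin p → Measure ℝ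
  | 0 => fun i j => if i = j then Measure.dirac 0 else 0
  | n + 1 => mconv μ (mconvPow μ n)

/-- The Markov renewal measure `U = Σ_{n ≥ 0} μ^{*n}`. -/
def renewal {p : ℕ} (μ : Fin p → Fin p → Measure ℝ) : Fin p → Fin p → Measure ℝ :=
  fun i j => Measure.sum fun n => mconvPow μ n i j

/-- `Λ = {z ∈ D(Lμ) : det(I_p - Lμ(z)) = 0}`. -/
def LambdaSet {p : ℕ} (μ : Fin p → Fin p → Measure ℝ) : Set ℂ :=
  {z ∈ LTdom μ | Matrix.det (1 - lapT μ z) = 0}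

attribute [local instance] Matrix.linftyOpNormedRing

namespace LamAux

open Complex Set Metric NNReal Matrix

variable {ν : Measure ℝ}

lemma ae_nonneg (h : ν (Set.Iio 0) = 0) : ∀ᵐ x ∂ν, 0 ≤ x := by
  rw [ae_iff]; convert h using 2; ext x; simp [not_le]

lemma norm_cexp (z : ℂ) (x : ℝ) : ‖Complex.exp (-z * x)‖ = Real.exp (-z.re * x) := by
  rw [Complex.norm_exp]; congr 1; simp [Complex.mul_re]

lemma integrable_rexp_of_le (h0 : ν (Set.Iio 0) = 0) {a b : ℝ}
    (ha : Integrable (fun x => Real.exp (-a * x)) ν) (hab : a ≤ b) :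
    Integrable (fun x => Real.exp (-b * x)) ν := by
  refine ha.mono' ((Real.continuous_exp.comp
    (continuous_const.mul continuous_id)).aestronglyMeasurable) ?_
  filter_upwards [ae_nonneg h0] with x hx
  rw [Real.norm_eq_abs, abs_of_pos (Real.exp_pos _)]
  exact Real.exp_le_exp.mpr (by nlinarith)

lemma integrable_cexp (h0 : ν (Set.Iio 0) = 0) {a : ℝ}
    (ha : Integrable (fun x => Real.exp (-a * x)) ν) {z : ℂ} (hz : a ≤ z.re) :
    Integrable (fun x : ℝ => Complex.exp (-z * x)) ν := by
  refine (integrable_rexp_of_le h0 ha hz).mono'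
    ((Complex.continuous_exp.comp
      ((continuous_const.mul Complex.continuous_ofReal))).aestronglyMeasurable) ?_
  filter_upwards with x
  exact (norm_cexp z x).le

lemma hasDerivAt_lap (h0 : ν (Set.Iio 0) = 0) {a : ℝ}
    (ha : Integrable (fun x => Real.exp (-a * x)) ν) {z₀ : ℂ} (hz : a < z₀.re) :
    HasDerivAt (fun z : ℂ => ∫ x, Complex.exp (-z * x) ∂ν)
      (∫ x, (-(x : ℂ)) * Complex.exp (-z₀ * x) ∂ν) z₀ := by
  set ε : ℝ := (z₀.re - a) / 2 with hεdef
  have hε0 : 0 < ε := by simp only [hεdef]; linarith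
  have key := hasDerivAt_integral_of_dominated_loc_of_deriv_le (μ := ν)
      (F := fun (z : ℂ) (x : ℝ) => Complex.exp (-z * x))
      (F' := fun (z : ℂ) (x : ℝ) => (-(x : ℂ)) * Complex.exp (-z * x))
      (bound := fun x => ε⁻¹ * Real.exp (-a * x)) (x₀ := z₀) (Metric.ball_mem_nhds z₀ hε0)
      ?_ ?_ ?_ ?_ ?_ ?_
  · exact key.2
  · filter_upwards with z
    exact ((Complex.continuous_exp.comp
      ((continuous_const.mul Complex.continuous_ofReal))).aestronglyMeasurable)
  · exact integrable_cexp h0 ha hz.le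
  · exact (((Complex.continuous_ofReal.neg).mul (Complex.continuous_exp.comp
      ((continuous_const.mul Complex.continuous_ofReal)))).aestronglyMeasurable)
  · filter_upwards [ae_nonneg h0] with x hx
    intro z hzball
    have hre : a + ε ≤ z.re := by
      have h1 : |z.re - z₀.re| ≤ ‖z - z₀‖ := by
        simpa using Complex.abs_re_le_norm (z - z₀)
      rw [mem_ball, Complex.dist_eq] at hzball
      have h2 : |z.re - z₀.re| < ε := lt_of_le_of_lt h1 hzball
      have h3 := abs_lt.mp h2
      have hz₀ : z₀.re - ε = a + ε := by rw [hεdef]; ring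
      linarith [h3.1]
    rw [norm_mul, norm_cexp, norm_neg, Complex.norm_real, Real.norm_eq_abs,
      _root_.abs_of_nonneg hx]
    have step1 : Real.exp (-z.re * x) ≤ Real.exp (-(a + ε) * x) :=
      Real.exp_le_exp.mpr (by nlinarith)
    have step2 : x * Real.exp (-(a + ε) * x) ≤ ε⁻¹ * Real.exp (-a * x) := by
      have hxe : x ≤ ε⁻¹ * Real.exp (ε * x) := by
        have h3 : ε * x ≤ Real.exp (ε * x) := by
          have := Real.add_one_le_exp (ε * x); linarith
        have h4 : ε * (ε⁻¹ * Real.exp (ε * x)) = Real.exp (ε * x) := by field_simp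
        exact (mul_le_mul_iff_right₀ hε0).mp (by rw [h4]; exact h3)
      calc x * Real.exp (-(a + ε) * x)
          ≤ (ε⁻¹ * Real.exp (ε * x)) * Real.exp (-(a + ε) * x) :=
            mul_le_mul_of_nonneg_right hxe (Real.exp_pos _).le
        _ = ε⁻¹ * Real.exp (-a * x) := by
            rw [mul_assoc, ← Real.exp_add]; ring_nf
    calc x * Real.exp (-z.re * x) ≤ x * Real.exp (-(a + ε) * x) :=
          mul_le_mul_of_nonneg_left step1 hx
      _ ≤ ε⁻¹ * Real.exp (-a * x) := step2
  · exact ha.const_mul _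
  · filter_upwards with x
    intro z _
    have h1 : HasDerivAt (fun z : ℂ => -z * (x : ℂ)) (-(x : ℂ)) z := by
      simpa using ((hasDerivAt_id z).neg.mul_const (x : ℂ))
    have h2 := h1.cexp
    exact h2.congr_deriv (by ring)

lemma lap_decomp (h0 : ν (Set.Iio 0) = 0) {z : ℂ}
    (hz : Integrable (fun x : ℝ => Complex.exp (-z * x)) ν) :
    (∫ x, Complex.exp (-z * x) ∂ν) - ((ν {0}).toReal : ℂ)
      = ∫ x in Set.Ioi 0, Complex.exp (-z * x) ∂ν := by
  have hmeas : MeasurableSet ({0} : Set ℝ) := measurableSet_singleton 0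
  have h1 : (∫ x in ({0} : Set ℝ), Complex.exp (-z * x) ∂ν) = ((ν {0}).toReal : ℂ) := by
    rw [MeasureTheory.Measure.restrict_singleton, integral_smul_measure, integral_dirac]
    simp
  have h2 : (∫ x in ({0}ᶜ : Set ℝ), Complex.exp (-z * x) ∂ν)
      = ∫ x in Set.Ioi 0, Complex.exp (-z * x) ∂ν := by
    apply setIntegral_congr_set
    rw [Filter.eventuallyEq_set]
    filter_upwards [ae_nonneg h0] with x hx
    simp only [Set.mem_compl_iff, Set.mem_singleton_iff, Set.mem_Ioi]
    constructor
    · intro h; exact lt_of_le_of_ne hx (Ne.symm h)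
    · intro h; exact ne_of_gt h
  have h3 := MeasureTheory.integral_add_compl hmeas hz
  rw [h1, h2] at h3
  linear_combination -h3

lemma norm_tail_le {z : ℂ} :
    ‖∫ x in Set.Ioi 0, Complex.exp (-z * x) ∂ν‖
      ≤ ∫ x in Set.Ioi 0, Real.exp (-z.re * x) ∂ν := by
  calc ‖∫ x in Set.Ioi 0, Complex.exp (-z * x) ∂ν‖
      ≤ ∫ x in Set.Ioi 0, ‖Complex.exp (-z * x)‖ ∂ν := norm_integral_le_integral_norm _
    _ = ∫ x in Set.Ioi 0, Real.exp (-z.re * x) ∂ν := by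
        apply integral_congr_ae
        filter_upwards with x using norm_cexp z x

lemma tail_mono (h0 : ν (Set.Iio 0) = 0) {a θ R : ℝ}
    (ha : Integrable (fun x => Real.exp (-a * x)) ν) (haR : a ≤ R) (hθ : R ≤ θ) :
    (∫ x in Set.Ioi 0, Real.exp (-θ * x) ∂ν) ≤ ∫ x in Set.Ioi 0, Real.exp (-R * x) ∂ν := by
  have hR := integrable_rexp_of_le h0 ha haR
  have hθi := integrable_rexp_of_le h0 ha (le_trans haR hθ)
  refine setIntegral_mono_on hθi.restrict hR.restrict measurableSet_Ioi ?_
  intro x hx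
  exact Real.exp_le_exp.mpr (by nlinarith [le_of_lt (Set.mem_Ioi.mp hx)])

lemma tendsto_tail (h0 : ν (Set.Iio 0) = 0) {a : ℝ}
    (ha : Integrable (fun x => Real.exp (-a * x)) ν) :
    Tendsto (fun θ : ℝ => ∫ x in Set.Ioi 0, Real.exp (-θ * x) ∂ν) atTop (𝓝 0) := by
  have h := MeasureTheory.tendsto_integral_filter_of_dominated_convergence
      (μ := ν.restrict (Set.Ioi 0)) (l := atTop) (F := fun θ (x : ℝ) => Real.exp (-θ * x))
      (f := fun _ => (0 : ℝ)) (fun x => Real.exp (-a * x)) ?_ ?_ ?_ ?_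
  · simpa using h
  · filter_upwards with θ
    exact (Real.continuous_exp.comp (continuous_const.mul continuous_id)).aestronglyMeasurable
  · filter_upwards [eventually_ge_atTop a] with θ hθ
    filter_upwards [ae_restrict_mem measurableSet_Ioi] with x hx
    rw [Real.norm_eq_abs, abs_of_pos (Real.exp_pos _)]
    exact Real.exp_le_exp.mpr (by nlinarith [le_of_lt (Set.mem_Ioi.mp hx)])
  · exact ha.restrict
  · filter_upwards [ae_restrict_mem measurableSet_Ioi] with x hx
    have hx0 : (0:ℝ) < x := hx
    have h1 : Tendsto (fun θ : ℝ => θ * x) atTop atTop := Tendsto.atTop_mul_const hx0 tendsto_id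
    have h2 : Tendsto (fun θ : ℝ => -θ * x) atTop atBot := by
      simp only [neg_mul]
      exact tendsto_neg_atBot_iff.mpr h1
    exact Real.tendsto_exp_atBot.comp h2

variable {p : ℕ}

lemma norm_le_sum_entries (A : Matrix (Fin p) (Fin p) ℂ) :
    ‖A‖ ≤ ∑ i, ∑ j, ‖A i j‖ := by
  have h : ‖A‖₊ ≤ ∑ i, ∑ j, ‖A i j‖₊ := by
    rw [Matrix.linfty_opNNNorm_def]
    exact Finset.sup_le fun i _ =>
      Finset.single_le_sum (f := fun i => ∑ j, ‖A i j‖₊) (fun _ _ => zero_le) (Finset.mem_univ i)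
  calc ‖A‖ = ((‖A‖₊ : ℝ≥0) : ℝ) := (coe_nnnorm _).symm
    _ ≤ ((∑ i, ∑ j, ‖A i j‖₊ : ℝ≥0) : ℝ) := by exact_mod_cast h
    _ = ∑ i, ∑ j, ‖A i j‖ := by push_cast; rfl

lemma pow_mulVec_fixed {A : Matrix (Fin p) (Fin p) ℂ} {v : Fin p → ℂ}
    (h : A *ᵥ v = v) : ∀ n : ℕ, (A ^ n) *ᵥ v = v := by
  intro n
  induction n with
  | zero => simp [Matrix.one_mulVec]
  | succ n ih => rw [pow_succ, ← Matrix.mulVec_mulVec, h, ih]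

lemma det_ne_zero_of_pow_norm_lt {A : Matrix (Fin p) (Fin p) ℂ} {m : ℕ}
    {c : ℝ} (hc : c < 1) (h : ‖A ^ m‖ ≤ c) : Matrix.det (1 - A) ≠ 0 := by
  intro hdet
  obtain ⟨v, hv0, hv⟩ := (Matrix.exists_mulVec_eq_zero_iff).mpr hdet
  have hAv : A *ᵥ v = v := by
    rw [Matrix.sub_mulVec, Matrix.one_mulVec, sub_eq_zero] at hv
    exact hv.symm
  have hpow := pow_mulVec_fixed hAv m
  have hnorm := Matrix.linfty_opNorm_mulVec (A ^ m) v
  rw [hpow] at hnorm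
  have hvpos : 0 < ‖v‖ := norm_pos_iff.mpr hv0
  nlinarith [mul_le_mul_of_nonneg_right h (norm_nonneg v)]

lemma det_ne_zero_of_close {A₀ A : Matrix (Fin p) (Fin p) ℂ}
    (h₀ : Matrix.det (1 - A₀) ≠ 0)
    (h : ‖A - A₀‖ < (‖(1 - A₀)⁻¹‖ + 1)⁻¹) : Matrix.det (1 - A) ≠ 0 := by
  intro hdet
  set B := 1 - A₀ with hB
  obtain ⟨v, hv0, hv⟩ := (Matrix.exists_mulVec_eq_zero_iff).mpr hdet
  have hAv : A *ᵥ v = v := by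
    rw [Matrix.sub_mulVec, Matrix.one_mulVec, sub_eq_zero] at hv
    exact hv.symm
  have hBv : B *ᵥ v = (A - A₀) *ᵥ v := by
    rw [hB, Matrix.sub_mulVec, Matrix.sub_mulVec, Matrix.one_mulVec, hAv]
  have hBinv : B⁻¹ * B = 1 := Matrix.nonsing_inv_mul B (isUnit_iff_ne_zero.mpr h₀)
  have hv' : v = B⁻¹ *ᵥ ((A - A₀) *ᵥ v) := by
    rw [← hBv, Matrix.mulVec_mulVec, hBinv, Matrix.one_mulVec]
  have hnorm : ‖v‖ ≤ ‖B⁻¹‖ * (‖A - A₀‖ * ‖v‖) := by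
    calc ‖v‖ = ‖B⁻¹ *ᵥ ((A - A₀) *ᵥ v)‖ := by rw [← hv']
      _ ≤ ‖B⁻¹‖ * ‖(A - A₀) *ᵥ v‖ := Matrix.linfty_opNorm_mulVec _ _
      _ ≤ ‖B⁻¹‖ * (‖A - A₀‖ * ‖v‖) :=
          mul_le_mul_of_nonneg_left (Matrix.linfty_opNorm_mulVec _ _) (norm_nonneg _)
  have hvpos : 0 < ‖v‖ := norm_pos_iff.mpr hv0
  have hC : (0:ℝ) ≤ ‖B⁻¹‖ := norm_nonneg _
  have hd : (0:ℝ) ≤ ‖A - A₀‖ := norm_nonneg _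
  have hlt : ‖A - A₀‖ * (‖B⁻¹‖ + 1) < 1 := by
    have hpos : (0:ℝ) < ‖B⁻¹‖ + 1 := by linarith
    calc ‖A - A₀‖ * (‖B⁻¹‖ + 1) < (‖B⁻¹‖ + 1)⁻¹ * (‖B⁻¹‖ + 1) :=
          mul_lt_mul_of_pos_right h hpos
      _ = 1 := inv_mul_cancel₀ hpos.ne'
  nlinarith

lemma det_one_sub_ne_of_specRad {A : Matrix (Fin p) (Fin p) ℂ}
    (hA : sSup ((fun z => ‖z‖) '' spectrum ℂ A) < 1) :
    Matrix.det (1 - A) ≠ 0 := by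
  intro h
  have hnu : ¬ IsUnit (1 - A) := by
    rw [Matrix.isUnit_iff_isUnit_det, isUnit_iff_ne_zero, h]
    simp
  have h1 : (1 : ℂ) ∈ spectrum ℂ A := by
    rw [spectrum.mem_iff, _root_.map_one]
    exact hnu
  have hmem : (1 : ℝ) ∈ (fun z => ‖z‖) '' spectrum ℂ A :=
    ⟨1, h1, by simp⟩
  have hbdd : BddAbove ((fun z => ‖z‖) '' spectrum ℂ A) :=
    ((Matrix.finite_spectrum A).image _).bddAbove
  have := le_csSup hbdd hmem
  linarith

lemma differentiableOn_detF (μ : Fin p → Fin p → Measure ℝ)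
    (h0 : ∀ i j, μ i j (Set.Iio 0) = 0) {a : ℝ}
    (ha : ∀ i j, Integrable (fun x => Real.exp (-a * x)) (μ i j)) :
    DifferentiableOn ℂ (fun z => Matrix.det (1 - lapT μ z)) {z : ℂ | a < z.re} := by
  have hentry : ∀ i j, DifferentiableOn ℂ (fun z => lapT μ z i j) {z : ℂ | a < z.re} := by
    intro i j z hz
    exact ((hasDerivAt_lap (h0 i j) (ha i j) hz).differentiableAt).differentiableWithinAt
  have heq : (fun z => Matrix.det (1 - lapT μ z)) = fun z => ∑ σ : Equiv.Perm (Fin p),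
      ((Equiv.Perm.sign σ : ℤ) : ℂ) *
        ∏ i, ((1 : Matrix (Fin p) (Fin p) ℂ) (σ i) i - lapT μ z (σ i) i) := by
    funext z
    rw [Matrix.det_apply]
    congr 1
    funext σ
    rw [Units.smul_def, zsmul_eq_mul]
    rfl
  rw [heq]
  apply DifferentiableOn.fun_sum
  intro σ _
  exact ((DifferentiableOn.fun_finsetProd (u := Finset.univ)
    (fun i _ => (differentiableOn_const _).sub (hentry (σ i) i)))).const_mul _

end LamAux

/-- **Lemma 2.9, (D) ⟹ finiteness of `Λ_ϑ`.** Under (A1) and (A2), if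
`limsup_{η→±∞} sup_{θ≥ϑ} ‖Lμ(θ+iη)^m‖ < 1` for some `m ≥ 1`, then
`Λ_ϑ = {λ ∈ D(Lμ) : Re(λ) > ϑ, det(I_p − Lμ(λ)) = 0}` is finite. -/
theorem limsup_implies_lambda_finite {p : ℕ} (μ : Fin p → Fin p → Measure ℝ)
    (hloc : ∀ i j, IsLocallyFiniteMeasure (μ i j))
    (hsupp : ∀ i j, μ i j (Set.Iio 0) = 0)
    (ϑ : ℝ) (hA1 : (ϑ : ℂ) ∈ interior (LTdom μ))
    (hA2 : specRad p (atomMat μ) < 1)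
    (hD : ∃ m : ℕ, 0 < m ∧ ∃ c : ℝ, c < 1 ∧ ∀ᶠ η : ℝ in (atBot ⊔ atTop),
      ∀ θ : ℝ, ϑ ≤ θ → ‖(lapT μ (θ + η * Complex.I)) ^ m‖ ≤ c) :
    {z ∈ LambdaSet μ | ϑ < z.re}.Finite := by
  classical
  by_contra hfin
  have hinf : {z ∈ LambdaSet μ | ϑ < z.re}.Infinite := hfin
  set S := {z ∈ LambdaSet μ | ϑ < z.re} with hSdef
  have hSmem : ∀ z ∈ S, Matrix.det (1 - lapT μ z) = 0 ∧ ϑ < z.re := by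
    intro z hz
    exact ⟨hz.1.2, hz.2⟩
  -- choose `a < ϑ` in the domain
  obtain ⟨ε₀, hε₀, hball⟩ := Metric.mem_nhds_iff.mp (mem_interior_iff_mem_nhds.mp hA1)
  set a : ℝ := ϑ - ε₀ / 2 with hadef
  have haϑ : a < ϑ := by rw [hadef]; linarith
  have haD : ((a : ℝ) : ℂ) ∈ LTdom μ := by
    apply hball
    rw [Metric.mem_ball, Complex.dist_eq]
    have h1 : (a : ℂ) - (ϑ : ℂ) = ((a - ϑ : ℝ) : ℂ) := by push_cast; ring
    rw [h1, Complex.norm_real, Real.norm_eq_abs, hadef]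
    rw [show ϑ - ε₀ / 2 - ϑ = -(ε₀ / 2) by ring, abs_neg, abs_of_pos (by linarith)]
    linarith
  have ha : ∀ i j, Integrable (fun x => Real.exp (-a * x)) (μ i j) := by
    intro i j
    have := haD i j
    simpa [Complex.ofReal_re] using this
  have hUopen : IsOpen {z : ℂ | a < z.re} := isOpen_lt continuous_const Complex.continuous_re
  have hUconn : IsPreconnected {z : ℂ | a < z.re} := (convex_halfSpace_re_gt a).isPreconnected
  have hFan : AnalyticOnNhd ℂ (fun z => Matrix.det (1 - lapT μ z)) {z : ℂ | a < z.re} :=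
    (LamAux.differentiableOn_detF μ hsupp ha).analyticOnNhd hUopen
  -- bounds on the imaginary part
  obtain ⟨m, hm0, c, hc, hev⟩ := hD
  rw [eventually_sup] at hev
  obtain ⟨hbot, htop⟩ := hev
  obtain ⟨M₁, hM₁⟩ := eventually_atBot.mp hbot
  obtain ⟨M₂, hM₂⟩ := eventually_atTop.mp htop
  have hIm : ∀ z ∈ S, M₁ < z.im ∧ z.im < M₂ := by
    intro z hz
    obtain ⟨hdet0, hre⟩ := hSmem z hz
    constructor
    · by_contra hle
      push_neg at hle
      have h := hM₁ z.im hle z.re hre.le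
      rw [Complex.re_add_im] at h
      exact LamAux.det_ne_zero_of_pow_norm_lt hc h hdet0
    · by_contra hle
      push_neg at hle
      have h := hM₂ z.im hle z.re hre.le
      rw [Complex.re_add_im] at h
      exact LamAux.det_ne_zero_of_pow_norm_lt hc h hdet0
  -- bound on the real part
  have hBdet : Matrix.det (1 - atomMat μ) ≠ 0 := LamAux.det_one_sub_ne_of_specRad hA2
  set ε₁ : ℝ := (‖(1 - atomMat μ)⁻¹‖ + 1)⁻¹ with hε₁def
  have hε₁pos : 0 < ε₁ := by
    rw [hε₁def]
    have : (0:ℝ) ≤ ‖(1 - atomMat μ)⁻¹‖ := norm_nonneg _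
    exact inv_pos.mpr (by linarith)
  set g : ℝ → ℝ := fun θ => ∑ i, ∑ j, ∫ x in Set.Ioi 0, Real.exp (-θ * x) ∂(μ i j) with hgdef
  have hg : Filter.Tendsto g atTop (𝓝 0) := by
    have h := tendsto_finset_sum (Finset.univ : Finset (Fin p)) (fun i _ =>
      tendsto_finset_sum (Finset.univ : Finset (Fin p)) (fun j _ =>
        LamAux.tendsto_tail (hsupp i j) (ha i j)))
    simpa [hgdef] using h
  obtain ⟨R₀, hR₀⟩ := eventually_atTop.mp (hg.eventually (gt_mem_nhds hε₁pos))
  set R : ℝ := max R₀ ϑ with hRdef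
  have haR : a < R := lt_of_lt_of_le haϑ (le_max_right _ _)
  have hgR : g R < ε₁ := hR₀ R (le_max_left _ _)
  have hdetR : ∀ z : ℂ, R ≤ z.re → Matrix.det (1 - lapT μ z) ≠ 0 := by
    intro z hz
    apply LamAux.det_ne_zero_of_close hBdet
    have hnorm : ‖lapT μ z - atomMat μ‖ ≤ g R := by
      refine le_trans (LamAux.norm_le_sum_entries _) ?_
      refine Finset.sum_le_sum fun i _ => Finset.sum_le_sum fun j _ => ?_
      have hint : Integrable (fun x : ℝ => Complex.exp (-z * x)) (μ i j) :=
        LamAux.integrable_cexp (hsupp i j) (ha i j) (by linarith)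
      have hentry : (lapT μ z - atomMat μ) i j
          = ∫ x in Set.Ioi 0, Complex.exp (-z * x) ∂(μ i j) := by
        rw [Matrix.sub_apply]
        exact LamAux.lap_decomp (hsupp i j) hint
      rw [hentry]
      refine le_trans LamAux.norm_tail_le ?_
      exact LamAux.tail_mono (hsupp i j) (ha i j) haR.le hz
    exact lt_of_le_of_lt hnorm hgR
  have hRe : ∀ z ∈ S, z.re < R := by
    intro z hz
    by_contra hge
    push_neg at hge
    exact hdetR z hge (hSmem z hz).1
  -- S is contained in a compact ball
  set r : ℝ := max |ϑ| |R| + max |M₁| |M₂| with hrdef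
  have hSsub : S ⊆ Metric.closedBall (0 : ℂ) r := by
    intro z hz
    obtain ⟨hdet0, hre⟩ := hSmem z hz
    obtain ⟨him1, him2⟩ := hIm z hz
    rw [Metric.mem_closedBall, dist_zero_right]
    have h1 : ‖z‖ ≤ |z.re| + |z.im| := by
      exact Complex.norm_le_abs_re_add_abs_im z
    have h2 : |z.re| ≤ max |ϑ| |R| := by
      rw [abs_le]
      constructor
      · have := neg_abs_le ϑ
        have := le_max_left |ϑ| |R|
        linarith
      · have := le_abs_self R
        have := le_max_right |ϑ| |R|
        linarith [hRe z hz]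
    have h3 : |z.im| ≤ max |M₁| |M₂| := by
      rw [abs_le]
      constructor
      · have := neg_abs_le M₁
        have := le_max_left |M₁| |M₂|
        linarith
      · have := le_abs_self M₂
        have := le_max_right |M₁| |M₂|
        linarith
    rw [hrdef]
    linarith
  -- accumulation point
  obtain ⟨x, hxball, hacc⟩ :=
    hinf.exists_accPt_of_subset_isCompact (isCompact_closedBall (0 : ℂ) r) hSsub
  have hfreq : ∃ᶠ y in 𝓝 x, y ≠ x ∧ y ∈ S := (accPt_iff_frequently (x := x) (C := S)).mp hacc
  have hxcl : x ∈ closure S := mem_closure_iff_frequently.mpr (hfreq.mono fun y hy => hy.2)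
  have hxre : ϑ ≤ x.re := by
    have hcl : closure S ⊆ {z : ℂ | ϑ ≤ z.re} :=
      closure_minimal (fun z hz => (hSmem z hz).2.le)
        (isClosed_le continuous_const Complex.continuous_re)
    exact hcl hxcl
  have hxU : x ∈ {z : ℂ | a < z.re} := lt_of_lt_of_le haϑ hxre
  have hev0 : ∀ᶠ z in 𝓝 x, Matrix.det (1 - lapT μ z) = 0 := by
    rcases (hFan x hxU).eventually_eq_zero_or_eventually_ne_zero with h | h
    · exact h
    · exfalso
      have hfreq' : ∃ᶠ y in 𝓝[≠] x, y ∈ S := by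
        rw [frequently_nhdsWithin_iff]
        exact hfreq.mono fun y hy => ⟨hy.2, hy.1⟩
      obtain ⟨y, hyS, hyne⟩ := (hfreq'.and_eventually h).exists
      exact hyne (hSmem y hyS).1
  have hF0 : Set.EqOn (fun z => Matrix.det (1 - lapT μ z)) 0 {z : ℂ | a < z.re} :=
    hFan.eqOn_zero_of_preconnected_of_eventuallyEq_zero hUconn hxU hev0
  have hw : ((R + 1 : ℝ) : ℂ) ∈ {z : ℂ | a < z.re} := by
    simp only [Set.mem_setOf_eq, Complex.ofReal_re]
    linarith
  have hzero := hF0 hw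
  exact hdetR ((R + 1 : ℝ) : ℂ) (by rw [Complex.ofReal_re]; linarith) hzero
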